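/- Let X be a separable real Hilbert space and J : X → ℝ continuous, Gâteaux differentiable and sequentially weakly upper semicontinuous. Set Ψ(x) = ½‖x‖² − J(x). Assume for some r > inf_X Ψ the set Ψ^{-1}((-∞,r)) is bounded and the restriction of J' to Ψ^{-1}((-∞,r)) is nonexpansive. Then for every ρ ∈ (inf_X Ψ, r), the sets Ψ^{-1}((-∞,ρ]) and Ψ^{-1}(inf_X Ψ) are connected in the weak topology of X. -/

import Mathlib

open Filter Topology

instance weakSpace_continuousSMul {E : Type*} [AddCommGroup E] [Module ℝ E]
    [TopologicalSpace E] : ContinuousSMul ℝ (WeakSpace ℝ E) :=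
  WeakBilin.instContinuousSMul (topDualPairing ℝ E).flip

section Aux

variable {X : Type*} [NormedAddCommGroup X] [InnerProductSpace ℝ X]

lemma line_hasDerivAt (J : X → ℝ) (J' : X → X)
    (hGateaux : ∀ x v : X, HasDerivAt (fun t : ℝ => J (x + t • v)) (inner ℝ (J' x) v : ℝ) 0)
    (u w : X) (t₀ : ℝ) :
    HasDerivAt (fun t : ℝ => (1 / 2 : ℝ) * ‖u + t • w‖ ^ 2 - J (u + t • w))
      ((inner ℝ (u + t₀ • w) w : ℝ) - (inner ℝ (J' (u + t₀ • w)) w : ℝ)) t₀ := by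
  have hline : HasDerivAt (fun t : ℝ => u + t • w) w t₀ := by
    simpa using ((hasDerivAt_id t₀).smul_const w).const_add u
  have hn := (HasDerivAt.inner ℝ hline hline).const_mul (1 / 2 : ℝ)
  simp only [real_inner_self_eq_norm_sq] at hn
  have hφ : HasDerivAt (fun t : ℝ => (1 / 2 : ℝ) * ‖u + t • w‖ ^ 2)
      ((inner ℝ (u + t₀ • w) w : ℝ)) t₀ := by
    refine hn.congr_deriv ?_
    rw [real_inner_comm w]
    ring
  have h1 := hGateaux (u + t₀ • w) w
  have h1' : HasDerivAt (fun s : ℝ => J (u + t₀ • w + s • w))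
      (inner ℝ (J' (u + t₀ • w)) w : ℝ) ((fun t : ℝ => t - t₀) t₀) := by simpa using h1
  have h2 : HasDerivAt (fun t : ℝ => t - t₀) 1 t₀ := (hasDerivAt_id t₀).sub_const t₀
  have h3 : HasDerivAt ((fun s : ℝ => J (u + t₀ • w + s • w)) ∘ fun t : ℝ => t - t₀)
      ((inner ℝ (J' (u + t₀ • w)) w : ℝ) * 1) t₀ := HasDerivAt.comp t₀ (by simpa using h1) h2
  have heq : ((fun s : ℝ => J (u + t₀ • w + s • w)) ∘ fun t : ℝ => t - t₀)
      = fun t : ℝ => J (u + t • w) := by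
    funext t
    simp only [Function.comp]
    congr 1
    module
  rw [heq, mul_one] at h3
  exact hφ.sub h3

lemma no_bump (J : X → ℝ) (hJcont : Continuous J) (J' : X → X)
    (hGateaux : ∀ x v : X, HasDerivAt (fun t : ℝ => J (x + t • v)) (inner ℝ (J' x) v : ℝ) 0)
    (Ψ : X → ℝ) (hΨ : ∀ x, Ψ x = (1 / 2 : ℝ) * ‖x‖ ^ 2 - J x) (r : ℝ)
    (hnonexp : ∀ u ∈ {x | Ψ x < r}, ∀ v ∈ {x | Ψ x < r}, ‖J' u - J' v‖ ≤ ‖u - v‖)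
    (u w : X) (s t : ℝ) (h0s : 0 < s) (hst : s ≤ t) (ht1 : t < 1)
    (hAs : ∀ τ ∈ Set.Icc (0 : ℝ) s, Ψ (u + τ • w) < r)
    (hAt : ∀ τ ∈ Set.Icc t (1 : ℝ), Ψ (u + τ • w) < r)
    (hgs : Ψ (u + (0 : ℝ) • w) < Ψ (u + s • w))
    (hgt : Ψ (u + (1 : ℝ) • w) < Ψ (u + t • w)) : False := by
  set g : ℝ → ℝ := fun τ => (1 / 2 : ℝ) * ‖u + τ • w‖ ^ 2 - J (u + τ • w) with hgdef
  set D : ℝ → ℝ := fun τ => (inner ℝ (u + τ • w) w : ℝ) - (inner ℝ (J' (u + τ • w)) w : ℝ) with hDdef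
  have hg : ∀ τ : ℝ, HasDerivAt g (D τ) τ := fun τ => line_hasDerivAt J J' hGateaux u w τ
  have hΨg : ∀ τ : ℝ, Ψ (u + τ • w) = g τ := fun τ => hΨ _
  have hgcont : Continuous g := by
    have hline : Continuous fun τ : ℝ => u + τ • w :=
      continuous_const.add (continuous_id.smul continuous_const)
    exact (continuous_const.mul ((continuous_norm.comp hline).pow 2)).sub (hJcont.comp hline)
  -- MVT on [0, s]
  obtain ⟨c, hc, hDc⟩ := exists_hasDerivAt_eq_slope g D h0s hgcont.continuousOn
    (fun x _ => hg x)
  -- MVT on [t, 1]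
  obtain ⟨d, hd, hDd⟩ := exists_hasDerivAt_eq_slope g D ht1 hgcont.continuousOn
    (fun x _ => hg x)
  have hDcpos : 0 < D c := by
    rw [hDc]
    apply div_pos _ (by linarith)
    rw [← hΨg, ← hΨg]; linarith
  have hDdneg : D d < 0 := by
    rw [hDd]
    apply div_neg_of_neg_of_pos _ (by linarith)
    rw [← hΨg, ← hΨg]; linarith
  -- monotonicity of D between points of the sublevel set
  have hcmem : Ψ (u + c • w) < r := hAs c ⟨hc.1.le, hc.2.le⟩
  have hdmem : Ψ (u + d • w) < r := hAt d ⟨hd.1.le, hd.2.le⟩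
  have hcd : c ≤ d := le_trans hc.2.le (le_trans hst hd.1.le)
  have hxdc : (u + d • w) - (u + c • w) = (d - c) • w := by module
  have h1 : (inner ℝ ((u + d • w) - (u + c • w)) w : ℝ) = (d - c) * ‖w‖ ^ 2 := by
    rw [hxdc, real_inner_smul_left, real_inner_self_eq_norm_sq]
  have h2 : (inner ℝ (J' (u + d • w) - J' (u + c • w)) w : ℝ) ≤ (d - c) * ‖w‖ ^ 2 := by
    calc (inner ℝ (J' (u + d • w) - J' (u + c • w)) w : ℝ)
        ≤ ‖J' (u + d • w) - J' (u + c • w)‖ * ‖w‖ := real_inner_le_norm _ _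
      _ ≤ ‖(u + d • w) - (u + c • w)‖ * ‖w‖ :=
          mul_le_mul_of_nonneg_right (hnonexp _ hdmem _ hcmem) (norm_nonneg _)
      _ = (d - c) * ‖w‖ ^ 2 := by
          rw [hxdc, norm_smul, Real.norm_eq_abs, abs_of_nonneg (by linarith)]; ring
  have hmono : D c ≤ D d := by
    have e1 : (inner ℝ ((u + d • w) - (u + c • w)) w : ℝ)
        = (inner ℝ (u + d • w) w : ℝ) - (inner ℝ (u + c • w) w : ℝ) := inner_sub_left _ _ _
    have e2 : (inner ℝ (J' (u + d • w) - J' (u + c • w)) w : ℝ)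
        = (inner ℝ (J' (u + d • w)) w : ℝ) - (inner ℝ (J' (u + c • w)) w : ℝ) := inner_sub_left _ _ _
    simp only [hDdef]
    rw [e1] at h1
    rw [e2] at h2
    linarith
  linarith

lemma convex_sublevel (J : X → ℝ) (hJcont : Continuous J) (J' : X → X)
    (hGateaux : ∀ x v : X, HasDerivAt (fun t : ℝ => J (x + t • v)) (inner ℝ (J' x) v : ℝ) 0)
    (Ψ : X → ℝ) (hΨ : ∀ x, Ψ x = (1 / 2 : ℝ) * ‖x‖ ^ 2 - J x) (r : ℝ)
    (hnonexp : ∀ u ∈ {x | Ψ x < r}, ∀ v ∈ {x | Ψ x < r}, ‖J' u - J' v‖ ≤ ‖u - v‖)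
    {ρ' : ℝ} (hρ' : ρ' < r) : Convex ℝ {x | Ψ x ≤ ρ'} := by
  intro u hu v hv a b ha hb hab
  simp only [Set.mem_setOf_eq] at hu hv ⊢
  set w : X := v - u with hw
  have key : ∀ τ ∈ Set.Icc (0 : ℝ) 1, Ψ (u + τ • w) ≤ ρ' := by
    by_contra hcon
    push_neg at hcon
    obtain ⟨b', hb'mem, hb'⟩ := hcon
    have hφcont : Continuous fun τ : ℝ => Ψ (u + τ • w) := by
      have hline : Continuous fun τ : ℝ => u + τ • w :=
        continuous_const.add (continuous_id.smul continuous_const)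
      have : Continuous Ψ := by
        have : Ψ = fun x => (1 / 2 : ℝ) * ‖x‖ ^ 2 - J x := funext hΨ
        rw [this]
        exact (continuous_const.mul (continuous_norm.pow 2)).sub hJcont
      exact this.comp hline
    have h0 : Ψ (u + (0 : ℝ) • w) ≤ ρ' := by simpa using hu
    have h1 : Ψ (u + (1 : ℝ) • w) ≤ ρ' := by
      have : u + (1 : ℝ) • w = v := by rw [hw]; module
      rw [this]; exact hv
    -- max of φ on [0,1]
    obtain ⟨t', ht'mem, ht'max⟩ := isCompact_Icc.exists_isMaxOn (Set.nonempty_Icc.2 zero_le_one)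
      hφcont.continuousOn
    have ht'big : ρ' < Ψ (u + t' • w) := lt_of_lt_of_le hb' (ht'max hb'mem)
    by_cases hcase : ∀ τ ∈ Set.Icc (0 : ℝ) 1, Ψ (u + τ • w) < r
    · -- all below r: use no_bump with s = t = t'
      have ht'0 : 0 < t' := by
        rcases lt_or_eq_of_le ht'mem.1 with h | h
        · exact h
        · exfalso; rw [← h] at ht'big; exact absurd h0 (not_le.2 ht'big)
      have ht'1 : t' < 1 := by
        rcases lt_or_eq_of_le ht'mem.2 with h | h
        · exact h
        · exfalso; rw [h] at ht'big; exact absurd h1 (not_le.2 ht'big)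
      exact no_bump J hJcont J' hGateaux Ψ hΨ r hnonexp u w t' t' ht'0 le_rfl ht'1
        (fun τ hτ => hcase τ ⟨hτ.1, le_trans hτ.2 ht'mem.2⟩)
        (fun τ hτ => hcase τ ⟨le_trans ht'mem.1 hτ.1, hτ.2⟩)
        (lt_of_le_of_lt h0 ht'big) (lt_of_le_of_lt h1 ht'big)
    · push_neg at hcase
      set T : Set ℝ := {τ ∈ Set.Icc (0 : ℝ) 1 | r ≤ Ψ (u + τ • w)} with hT
      have hTne : T.Nonempty := by
        obtain ⟨τ, hτ1, hτ2⟩ := hcase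
        exact ⟨τ, hτ1, hτ2⟩
      have hTclosed : IsClosed T :=
        isClosed_Icc.inter (isClosed_le continuous_const hφcont)
      have hTbddB : BddBelow T := ⟨0, fun τ hτ => hτ.1.1⟩
      have hTbddA : BddAbove T := ⟨1, fun τ hτ => hτ.1.2⟩
      set a' : ℝ := sInf T with ha'
      set b'' : ℝ := sSup T with hb''
      have ha'T : a' ∈ T := hTclosed.csInf_mem hTne hTbddB
      have hb''T : b'' ∈ T := hTclosed.csSup_mem hTne hTbddA
      have ha'0 : 0 < a' := by
        rcases lt_or_eq_of_le ha'T.1.1 with h | h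
        · exact h
        · exfalso
          have := ha'T.2
          rw [← h] at this
          linarith
      have hb''1 : b'' < 1 := by
        rcases lt_or_eq_of_le hb''T.1.2 with h | h
        · exact h
        · exfalso
          have := hb''T.2
          rw [h] at this
          linarith
      have hbelow : ∀ τ ∈ Set.Icc (0 : ℝ) 1, τ < a' → Ψ (u + τ • w) < r := by
        intro τ hτ hτa
        by_contra hge
        exact absurd (csInf_le hTbddB ⟨hτ, not_lt.1 hge⟩) (not_le.2 hτa)
      have habove : ∀ τ ∈ Set.Icc (0 : ℝ) 1, b'' < τ → Ψ (u + τ • w) < r := by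
        intro τ hτ hτb
        by_contra hge
        exact absurd (le_csSup hTbddA ⟨hτ, not_lt.1 hge⟩) (not_le.2 hτb)
      -- pick s slightly below a' with Ψ > ρ'
      have hopen : IsOpen {τ : ℝ | ρ' < Ψ (u + τ • w)} := isOpen_lt continuous_const hφcont
      have ha'mem : a' ∈ {τ : ℝ | ρ' < Ψ (u + τ • w)} := by
        exact Set.mem_setOf_eq ▸ lt_of_lt_of_le hρ' ha'T.2
      obtain ⟨ε, hε, hball⟩ := Metric.isOpen_iff.1 hopen a' ha'mem
      set s : ℝ := a' - min ε a' / 2 with hs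
      have hminpos : 0 < min ε a' := lt_min hε ha'0
      have hs0 : 0 < s := by
        have : min ε a' ≤ a' := min_le_right _ _
        simp only [hs]; linarith
      have hsa' : s < a' := by simp only [hs]; linarith
      have hsball : s ∈ Metric.ball a' ε := by
        simp only [Metric.mem_ball, hs, Real.dist_eq]
        rw [abs_of_nonpos (by linarith)]
        have : min ε a' ≤ ε := min_le_left _ _
        linarith
      have hsbig : ρ' < Ψ (u + s • w) := hball hsball
      -- pick t slightly above b'' with Ψ > ρ'
      have hb''mem : b'' ∈ {τ : ℝ | ρ' < Ψ (u + τ • w)} :=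
        Set.mem_setOf_eq ▸ lt_of_lt_of_le hρ' hb''T.2
      obtain ⟨ε', hε', hball'⟩ := Metric.isOpen_iff.1 hopen b'' hb''mem
      set t : ℝ := b'' + min ε' (1 - b'') / 2 with ht
      have hminpos' : 0 < min ε' (1 - b'') := lt_min hε' (by linarith)
      have htb'' : b'' < t := by simp only [ht]; linarith
      have ht1 : t < 1 := by
        have : min ε' (1 - b'') ≤ 1 - b'' := min_le_right _ _
        simp only [ht]; linarith
      have htball : t ∈ Metric.ball b'' ε' := by
        simp only [Metric.mem_ball, ht, Real.dist_eq]
        rw [abs_of_nonneg (by linarith)]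
        have : min ε' (1 - b'') ≤ ε' := min_le_left _ _
        linarith
      have htbig : ρ' < Ψ (u + t • w) := hball' htball
      have hab' : a' ≤ b'' := csInf_le_csSup hTne hTbddB hTbddA
      apply no_bump J hJcont J' hGateaux Ψ hΨ r hnonexp u w s t hs0 (by linarith) ht1
      · intro τ hτ
        exact hbelow τ ⟨hτ.1, by linarith [hτ.2, ha'T.1.2]⟩ (lt_of_le_of_lt hτ.2 hsa')
      · intro τ hτ
        exact habove τ ⟨by linarith [hτ.1, hb''T.1.1], hτ.2⟩ (lt_of_lt_of_le htb'' hτ.1)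
      · exact lt_of_le_of_lt h0 hsbig
      · exact lt_of_le_of_lt h1 htbig
  have hcomb : a • u + b • v = u + b • w := by
    have hab' : a = 1 - b := by linarith
    rw [hab', hw]; module
  rw [hcomb]
  exact key b ⟨hb, by linarith⟩

variable [CompleteSpace X]

lemma nested_inter (C : ℕ → Set X) (hconv : ∀ n, Convex ℝ (C n))
    (hclosed : ∀ n, IsClosed (C n)) (hne : ∀ n, (C n).Nonempty)
    (hmono : ∀ {n m : ℕ}, n ≤ m → C m ⊆ C n)
    (R : ℝ) (hR : ∀ n, ∀ x ∈ C n, ‖x‖ ≤ R) : ∃ x, ∀ n, x ∈ C n := by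
  have hex : ∀ n : ℕ, ∃ v ∈ C n, ‖(0 : X) - v‖ = ⨅ w : C n, ‖(0 : X) - w‖ := fun n =>
    exists_norm_eq_iInf_of_complete_convex (hne n) (hclosed n).isComplete (hconv n) 0
  choose x hxC hxnorm using hex
  set d : ℕ → ℝ := fun n => ‖(0 : X) - x n‖ with hd
  have hdle : ∀ n, ∀ y ∈ C n, d n ≤ ‖(0 : X) - y‖ := by
    intro n y hy
    rw [hd]
    simp only
    rw [hxnorm n]
    exact ciInf_le ⟨0, Set.forall_mem_range.2 fun _ => norm_nonneg _⟩ (⟨y, hy⟩ : C n)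
  have hdnorm : ∀ n, d n = ‖x n‖ := fun n => by rw [hd]; simp
  have hdmono : Monotone d := by
    intro n m hnm
    have := hdle n (x m) (hmono hnm (hxC m))
    simpa [hd] using this
  have hdnonneg : ∀ n, 0 ≤ d n := fun n => norm_nonneg _
  have hdboundR : ∀ n, d n ≤ R := fun n => by
    rw [hdnorm]; exact hR n (x n) (hxC n)
  -- d² converges to its sup
  have hd2mono : Monotone fun n => d n ^ 2 := fun n m h => by
    simp only
    exact pow_le_pow_left₀ (hdnonneg n) (hdmono h) 2
  have hd2bdd : BddAbove (Set.range fun n => d n ^ 2) := by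
    refine ⟨R ^ 2, Set.forall_mem_range.2 fun n => ?_⟩
    nlinarith [hdnonneg n, hdboundR n]
  set D : ℝ := ⨆ n, d n ^ 2 with hD
  have hD2 : Tendsto (fun n => d n ^ 2) atTop (𝓝 D) := tendsto_atTop_ciSup hd2mono hd2bdd
  have hd2leD : ∀ n, d n ^ 2 ≤ D := fun n => le_ciSup hd2bdd n
  -- key parallelogram estimate
  have key : ∀ n m : ℕ, n ≤ m → ‖x n - x m‖ ^ 2 ≤ 2 * (d m ^ 2 - d n ^ 2) := by
    intro n m hnm
    have hmid : (2⁻¹ : ℝ) • x n + (2⁻¹ : ℝ) • x m ∈ C n :=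
      hconv n (hxC n) (hmono hnm (hxC m)) (by norm_num) (by norm_num) (by norm_num)
    have hmid' : d n ≤ ‖(0 : X) - ((2⁻¹ : ℝ) • x n + (2⁻¹ : ℝ) • x m)‖ := hdle n _ hmid
    have hmideq : ‖(0 : X) - ((2⁻¹ : ℝ) • x n + (2⁻¹ : ℝ) • x m)‖ = 2⁻¹ * ‖x n + x m‖ := by
      have : (0 : X) - ((2⁻¹ : ℝ) • x n + (2⁻¹ : ℝ) • x m) = (-(2⁻¹) : ℝ) • (x n + x m) := by
        module
      rw [this, norm_smul]
      norm_num
    rw [hmideq] at hmid'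
    have hpar : ‖x n + x m‖ ^ 2 + ‖x n - x m‖ ^ 2 = 2 * (‖x n‖ ^ 2 + ‖x m‖ ^ 2) := by
      have := parallelogram_law_with_norm ℝ (x n) (x m)
      nlinarith [this]
    have hn1 : ‖x n‖ = d n := (hdnorm n).symm
    have hm1 : ‖x m‖ = d m := (hdnorm m).symm
    rw [hn1, hm1] at hpar
    have h5 : 2 * d n ≤ ‖x n + x m‖ := by linarith
    have h6 : (2 * d n) ^ 2 ≤ ‖x n + x m‖ ^ 2 :=
      pow_le_pow_left₀ (by positivity) h5 2
    nlinarith [h6, hpar]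
  -- Cauchy
  have hcauchy : CauchySeq x := by
    rw [Metric.cauchySeq_iff']
    intro ε hε
    have : ∀ᶠ n in atTop, D - d n ^ 2 < ε ^ 2 / 2 := by
      have := hD2.eventually (eventually_gt_nhds (show D - ε ^ 2 / 2 < D by nlinarith))
      filter_upwards [this] with n hn
      linarith
    obtain ⟨N, hN⟩ := this.exists
    refine ⟨N, fun n hn => ?_⟩
    have h1 : ‖x N - x n‖ ^ 2 ≤ 2 * (d n ^ 2 - d N ^ 2) := key N n hn
    have h2 : d n ^ 2 ≤ D := hd2leD n
    have h3 : ‖x N - x n‖ ^ 2 < ε ^ 2 := by linarith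
    have h4 : dist (x n) (x N) = ‖x N - x n‖ := by
      rw [dist_eq_norm, norm_sub_rev]
    rw [h4]
    nlinarith [norm_nonneg (x N - x n)]
  obtain ⟨y, hy⟩ := cauchySeq_tendsto_of_complete hcauchy
  refine ⟨y, fun n => ?_⟩
  apply (hclosed n).mem_of_tendsto hy
  filter_upwards [eventually_ge_atTop n] with m hm
  exact hmono hm (hxC m)

lemma exists_min (J : X → ℝ) (hJcont : Continuous J) (J' : X → X)
    (hGateaux : ∀ x v : X, HasDerivAt (fun t : ℝ => J (x + t • v)) (inner ℝ (J' x) v : ℝ) 0)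
    (Ψ : X → ℝ) (hΨ : ∀ x, Ψ x = (1 / 2 : ℝ) * ‖x‖ ^ 2 - J x)
    (r : ℝ) (hr : ∃ x, Ψ x < r) (hbdd : Bornology.IsBounded {x | Ψ x < r})
    (hnonexp : ∀ u ∈ {x | Ψ x < r}, ∀ v ∈ {x | Ψ x < r}, ‖J' u - J' v‖ ≤ ‖u - v‖) :
    ∃ x, ∀ y, Ψ x ≤ Ψ y := by
  have hΨcont : Continuous Ψ := by
    have : Ψ = fun x => (1 / 2 : ℝ) * ‖x‖ ^ 2 - J x := funext hΨ
    rw [this]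
    exact (continuous_const.mul (continuous_norm.pow 2)).sub hJcont
  obtain ⟨R, hR⟩ := hbdd.exists_norm_le
  -- helper applying nested_inter to sublevels
  have base : ∀ α : ℕ → ℝ, Antitone α → (∀ n, α n < r) → (∀ n, ∃ x, Ψ x ≤ α n) →
      ∃ x, ∀ n, Ψ x ≤ α n := by
    intro α hanti hαr hαne
    have := nested_inter (fun n => {x | Ψ x ≤ α n})
      (fun n => convex_sublevel J hJcont J' hGateaux Ψ hΨ r hnonexp (hαr n))
      (fun n => isClosed_le hΨcont continuous_const)
      (fun n => hαne n)
      (fun {n m} h x hx => le_trans hx (hanti h))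
      R (fun n x hx => hR x (lt_of_le_of_lt hx (hαr n)))
    obtain ⟨x, hx⟩ := this
    exact ⟨x, hx⟩
  by_cases hbb : BddBelow (Set.range Ψ)
  · set m : ℝ := sInf (Set.range Ψ) with hm
    obtain ⟨x₀, hx₀⟩ := hr
    have hmle : m ≤ Ψ x₀ := csInf_le hbb ⟨x₀, rfl⟩
    have hmr : m < r := lt_of_le_of_lt hmle hx₀
    set α : ℕ → ℝ := fun n => m + (r - m) / (n + 2) with hα
    have hαr : ∀ n, α n < r := by
      intro n
      have h1 : (r - m) / ((n : ℝ) + 2) < r - m := by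
        apply div_lt_self (by linarith)
        have : (0 : ℝ) ≤ (n : ℝ) := Nat.cast_nonneg n
        linarith
      simp only [hα]; linarith
    have hanti : Antitone α := by
      intro n k hnk
      simp only [hα]
      have h2 : ((n : ℝ) + 2) ≤ ((k : ℝ) + 2) := by
        have : (n : ℝ) ≤ (k : ℝ) := Nat.cast_le.2 hnk
        linarith
      have hrm : (0:ℝ) ≤ r - m := by linarith
      have hn0 : (0:ℝ) < (n : ℝ) + 2 := by positivity
      gcongr
    have hαne : ∀ n, ∃ x, Ψ x ≤ α n := by
      intro n
      have hmα : m < α n := by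
        simp only [hα]
        have : 0 < (r - m) / ((n : ℝ) + 2) := by
          apply div_pos (by linarith)
          have : (0 : ℝ) ≤ (n : ℝ) := Nat.cast_nonneg n
          linarith
        linarith
      obtain ⟨y, hy, hylt⟩ := exists_lt_of_csInf_lt (Set.range_nonempty Ψ) hmα
      obtain ⟨x, rfl⟩ := hy
      exact ⟨x, hylt.le⟩
    obtain ⟨x, hx⟩ := base α hanti hαr hαne
    have hαlim : Tendsto α atTop (𝓝 m) := by
      have h0 : Tendsto (fun n : ℕ => (r - m) / ((n : ℝ) + 2)) atTop (𝓝 0) := by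
        apply Tendsto.div_atTop tendsto_const_nhds
        exact tendsto_atTop_add_const_right atTop 2 tendsto_natCast_atTop_atTop
      have := tendsto_const_nhds.add h0 (x := atTop (α := ℕ)) (f := fun _ => m)
      simpa using this
    have hxm : Ψ x ≤ m := ge_of_tendsto hαlim (Eventually.of_forall hx)
    exact ⟨x, fun y => le_trans hxm (csInf_le hbb ⟨y, rfl⟩)⟩
  · exfalso
    rw [not_bddBelow_iff] at hbb
    set α : ℕ → ℝ := fun n => min r 0 - 1 - n with hα
    have hαr : ∀ n, α n < r := by
      intro n
      have h1 : min r 0 ≤ r := min_le_left _ _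
      have : (0 : ℝ) ≤ (n : ℝ) := Nat.cast_nonneg n
      simp only [hα]; linarith
    have hanti : Antitone α := by
      intro n k hnk
      have : (n : ℝ) ≤ (k : ℝ) := Nat.cast_le.2 hnk
      simp only [hα]; linarith
    have hαne : ∀ n, ∃ x, Ψ x ≤ α n := by
      intro n
      obtain ⟨y, hy, hylt⟩ := hbb (α n)
      obtain ⟨x, rfl⟩ := hy
      exact ⟨x, hylt.le⟩
    obtain ⟨x, hx⟩ := base α hanti hαr hαne
    obtain ⟨n, hn⟩ := exists_nat_gt (min r 0 - 1 - Ψ x)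
    have := hx n
    simp only [hα] at this
    linarith

end Aux

/-- Theorem 11 of the paper: let `X` be a separable real Hilbert space and `J : X → ℝ` a
continuous, Gâteaux differentiable (with Gâteaux derivative represented by `J' : X → X`)
and sequentially weakly upper semicontinuous functional. Set `Ψ x = ½‖x‖² − J x`. Assume
that for some `r > inf Ψ` the sublevel set `Ψ⁻¹((-∞,r))` is bounded and the restriction of
`J'` to it is nonexpansive. Then for every `ρ ∈ (inf Ψ, r)` the sets `Ψ⁻¹((-∞,ρ])` and
`Ψ⁻¹(inf Ψ)` (the set of global minimizers) are connected in the weak topology of `X`. -/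
theorem stmt_18 {X : Type*} [NormedAddCommGroup X] [InnerProductSpace ℝ X] [CompleteSpace X]
    [TopologicalSpace.SeparableSpace X]
    (J : X → ℝ) (hJcont : Continuous J)
    (J' : X → X)
    (hGateaux : ∀ x v : X, HasDerivAt (fun t : ℝ => J (x + t • v)) (inner ℝ (J' x) v : ℝ) 0)
    (hwusc : ∀ (x : X) (u : ℕ → X),
      (∀ y : X, Tendsto (fun n => (inner ℝ (u n) y : ℝ)) atTop (𝓝 (inner ℝ x y : ℝ))) →
      atTop.limsup (fun n => J (u n)) ≤ J x)
    (Ψ : X → ℝ) (hΨ : ∀ x, Ψ x = (1 / 2 : ℝ) * ‖x‖ ^ 2 - J x)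
    (r : ℝ) (hr : ∃ x, Ψ x < r) (hbdd : Bornology.IsBounded {x | Ψ x < r})
    (hnonexp : ∀ u ∈ {x | Ψ x < r}, ∀ v ∈ {x | Ψ x < r}, ‖J' u - J' v‖ ≤ ‖u - v‖) :
    ∀ ρ : ℝ, (∃ x, Ψ x < ρ) → ρ < r →
      IsConnected (show Set (WeakSpace ℝ X) from {x | Ψ x ≤ ρ}) ∧
        IsConnected (show Set (WeakSpace ℝ X) from {x | ∀ y, Ψ x ≤ Ψ y}) := by
  intro ρ hρ hρr
  obtain ⟨xm, hxm⟩ := exists_min J hJcont J' hGateaux Ψ hΨ r hr hbdd hnonexp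
  obtain ⟨xr, hxr⟩ := hr
  obtain ⟨xρ, hxρ⟩ := hρ
  have hmin_r : Ψ xm < r := lt_of_le_of_lt (hxm xr) hxr
  have hset : {x : X | ∀ y, Ψ x ≤ Ψ y} = {x : X | Ψ x ≤ Ψ xm} := by
    ext x
    constructor
    · intro h; exact h xm
    · intro h y; exact le_trans h (hxm y)
  constructor
  · have hconv : Convex ℝ {x : X | Ψ x ≤ ρ} :=
      convex_sublevel J hJcont J' hGateaux Ψ hΨ r hnonexp hρr
    exact Convex.isConnected (s := show Set (WeakSpace ℝ X) from {x | Ψ x ≤ ρ}) hconv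
      ⟨xρ, hxρ.le⟩
  · have hconv : Convex ℝ {x : X | Ψ x ≤ Ψ xm} :=
      convex_sublevel J hJcont J' hGateaux Ψ hΨ r hnonexp hmin_r
    have heq : (show Set (WeakSpace ℝ X) from {x | ∀ y, Ψ x ≤ Ψ y})
        = (show Set (WeakSpace ℝ X) from {x | Ψ x ≤ Ψ xm}) := hset
    rw [heq]
    exact Convex.isConnected (s := show Set (WeakSpace ℝ X) from {x | Ψ x ≤ Ψ xm}) hconv
      ⟨xm, show Ψ xm ≤ Ψ xm from le_rfl⟩
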